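/- Let (J₁,J₂,W) be a pure bigraphon that is thin, i.e., there exists a bigraph F with t^b_ind(F,W) = 0. Then W(x,y) ∈ {0,1} for almost all (x,y) ∈ J₁×J₂. -/

import Mathlib

open MeasureTheory

/-- If a pure bigraphon `(J₁,J₂,W)` is thin — there is a bigraph `F` with
`t^b_ind(F,W) = 0` — then `W` is 0-1 valued almost everywhere. -/
theorem thin_bigraphon_zero_one_valued
    {J₁ J₂ : Type*}
    [MetricSpace J₁] [CompleteSpace J₁] [TopologicalSpace.SeparableSpace J₁]
    [MeasurableSpace J₁] [BorelSpace J₁]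
    [MetricSpace J₂] [CompleteSpace J₂] [TopologicalSpace.SeparableSpace J₂]
    [MeasurableSpace J₂] [BorelSpace J₂]
    (μ₁ : Measure J₁) (μ₂ : Measure J₂)
    [IsProbabilityMeasure μ₁] [IsProbabilityMeasure μ₂]
    [μ₁.IsOpenPosMeasure] [μ₂.IsOpenPosMeasure]
    (W : J₁ → J₂ → ℝ)
    (hWmeas : Measurable (fun p : J₁ × J₂ => W p.1 p.2))
    (hW0 : ∀ x y, 0 ≤ W x y) (hW1 : ∀ x y, W x y ≤ 1)
    (hdist₁ : ∀ x x' : J₁, dist x x' = ∫ z, |W x z - W x' z| ∂μ₂)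
    (hdist₂ : ∀ y y' : J₂, dist y y' = ∫ z, |W z y - W z y'| ∂μ₁)
    (hthin : ∃ (k₁ k₂ : ℕ) (E : Finset (Fin k₁ × Fin k₂)),
      (∫ x : Fin k₁ → J₁, ∫ y : Fin k₂ → J₂,
        (∏ i, ∏ j, if (i, j) ∈ E then W (x i) (y j) else 1 - W (x i) (y j))
          ∂(Measure.pi fun _ => μ₂) ∂(Measure.pi fun _ => μ₁)) = 0) :
    ∀ᵐ p ∂(μ₁.prod μ₂), W p.1 p.2 = 0 ∨ W p.1 p.2 = 1 := by
  by_contra hcon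
  rw [ae_iff] at hcon
  -- Find `ε > 0` with the set where `ε ≤ W ≤ 1 - ε` of positive measure.
  set A : ℕ → Set (J₁ × J₂) := fun m =>
    {p | 1 / ((m : ℝ) + 1) ≤ W p.1 p.2 ∧ W p.1 p.2 ≤ 1 - 1 / ((m : ℝ) + 1)} with hA
  have hAmeas : ∀ m, MeasurableSet (A m) := by
    intro m
    simp only [hA, Set.setOf_and]
    exact (measurableSet_le measurable_const hWmeas).inter
      (measurableSet_le hWmeas measurable_const)
  have hsub : {p : J₁ × J₂ | ¬(W p.1 p.2 = 0 ∨ W p.1 p.2 = 1)} ⊆ ⋃ m, A m := by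
    intro p hp
    simp only [Set.mem_setOf_eq, not_or] at hp
    obtain ⟨h0, h1⟩ := hp
    have hw0 : 0 < W p.1 p.2 := lt_of_le_of_ne (hW0 _ _) (Ne.symm h0)
    have hw1 : W p.1 p.2 < 1 := lt_of_le_of_ne (hW1 _ _) h1
    obtain ⟨m, hm⟩ := exists_nat_ge (max (1 / W p.1 p.2) (1 / (1 - W p.1 p.2)))
    have hm1 : 1 / W p.1 p.2 ≤ (m : ℝ) + 1 := le_trans (le_max_left _ _) (by linarith)
    have hm2 : 1 / (1 - W p.1 p.2) ≤ (m : ℝ) + 1 := le_trans (le_max_right _ _) (by linarith)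
    rw [div_le_iff₀ hw0] at hm1
    rw [div_le_iff₀ (by linarith : (0:ℝ) < 1 - W p.1 p.2)] at hm2
    have hmpos : (0:ℝ) < (m : ℝ) + 1 := by positivity
    refine Set.mem_iUnion.2 ⟨m, ?_, ?_⟩
    · rw [div_le_iff₀ hmpos]
      nlinarith
    · have : 1 / ((m : ℝ) + 1) ≤ 1 - W p.1 p.2 := by
        rw [div_le_iff₀ hmpos]; nlinarith
      linarith
  have hU : (μ₁.prod μ₂) (⋃ m, A m) ≠ 0 := fun h => hcon (measure_mono_null hsub h)
  obtain ⟨m, hAm⟩ : ∃ m, (μ₁.prod μ₂) (A m) ≠ 0 := by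
    by_contra h
    push_neg at h
    exact hU (measure_iUnion_null h)
  set ε : ℝ := 1 / ((m : ℝ) + 1) with hεdef
  have hε : 0 < ε := by positivity
  -- Find `x₀` whose slice has positive measure.
  obtain ⟨x₀, hx₀⟩ : ∃ x, μ₂ (Prod.mk x ⁻¹' A m) ≠ 0 := by
    by_contra h
    push_neg at h
    apply hAm
    rw [Measure.prod_apply (hAmeas m)]
    simp [h]
  set S : Set J₂ := Prod.mk x₀ ⁻¹' A m with hSdef
  have hSmeas : MeasurableSet S := (hAmeas m).preimage measurable_prodMk_left
  have hS : ∀ y ∈ S, ε ≤ W x₀ y ∧ W x₀ y ≤ 1 - ε := fun y hy => hy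
  set cR : ℝ := (μ₂ S).toReal with hcRdef
  have hcR : 0 < cR := ENNReal.toReal_pos hx₀ (measure_ne_top μ₂ S)
  obtain ⟨k₁, k₂, E, hint⟩ := hthin
  set r : ℝ := ε * cR / (8 * ((k₁ : ℝ) + 1)) with hrdef
  have hr : 0 < r := by positivity
  -- measurable sections
  have hsec : ∀ x, Measurable (fun y => W x y) := fun x =>
    hWmeas.comp measurable_prodMk_left
  -- the "bad" sets
  set bad : J₁ → Set J₂ := fun x => {y | ε / 2 ≤ |W x y - W x₀ y|} with hbaddef
  have hbadmeas : ∀ x, MeasurableSet (bad x) := fun x =>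
    measurableSet_le measurable_const ((hsec x).sub (hsec x₀)).abs
  have hbad : ∀ x ∈ Metric.ball x₀ r, (μ₂ (bad x)).toReal ≤ cR / (4 * ((k₁ : ℝ) + 1)) := by
    intro x hx
    have hgmeas : Measurable fun y => |W x y - W x₀ y| := ((hsec x).sub (hsec x₀)).abs
    have hg : Integrable (fun y => |W x y - W x₀ y|) μ₂ := by
      refine (integrable_const (2:ℝ)).mono' hgmeas.aestronglyMeasurable ?_
      filter_upwards with y
      rw [Real.norm_eq_abs, abs_abs]
      have := hW0 x y; have := hW1 x y; have := hW0 x₀ y; have := hW1 x₀ y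
      rw [abs_le]; constructor <;> linarith
    have hmark := mul_meas_ge_le_integral_of_nonneg
      (ae_of_all _ fun y => abs_nonneg (W x y - W x₀ y)) hg (ε / 2)
    rw [← hdist₁ x x₀] at hmark
    have hdlt : dist x x₀ < r := Metric.mem_ball.1 hx
    have h1 : ε / 2 * (μ₂ (bad x)).toReal ≤ r := by
      refine le_trans ?_ hdlt.le
      exact hmark
    have h2 : (μ₂ (bad x)).toReal ≤ r / (ε / 2) := by
      rw [le_div_iff₀ (by positivity : (0:ℝ) < ε / 2)]
      linarith [mul_comm ((μ₂ (bad x)).toReal) (ε / 2)]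
    have h3 : r / (ε / 2) = cR / (4 * ((k₁ : ℝ) + 1)) := by
      rw [hrdef]
      field_simp
      ring
    rwa [h3] at h2
  -- the "good" sets
  set V : (Fin k₁ → J₁) → Set J₂ := fun xs => S \ ⋃ i, bad (xs i) with hVdef
  have hVmeas : ∀ xs, MeasurableSet (V xs) := fun xs =>
    hSmeas.diff (MeasurableSet.iUnion fun i => hbadmeas (xs i))
  have hVsize : ∀ xs : Fin k₁ → J₁, (∀ i, xs i ∈ Metric.ball x₀ r) →
      cR / 2 ≤ (μ₂ (V xs)).toReal := by
    intro xs hxs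
    have hsub2 : S ⊆ V xs ∪ ⋃ i, bad (xs i) := Set.subset_diff_union _ _
    have hUb : (μ₂ (⋃ i, bad (xs i))).toReal ≤ ∑ i, (μ₂ (bad (xs i))).toReal := by
      refine le_trans (ENNReal.toReal_mono ?_ (measure_iUnion_fintype_le μ₂ _)) ?_
      · exact ENNReal.sum_ne_top.2 fun i _ => measure_ne_top _ _
      · rw [ENNReal.toReal_sum fun i _ => measure_ne_top _ _]
    have h2 : cR ≤ (μ₂ (V xs)).toReal + (μ₂ (⋃ i, bad (xs i))).toReal := by
      calc cR ≤ (μ₂ (V xs ∪ ⋃ i, bad (xs i))).toReal :=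
            ENNReal.toReal_mono (measure_ne_top _ _) (measure_mono hsub2)
        _ ≤ ((μ₂ (V xs)) + (μ₂ (⋃ i, bad (xs i)))).toReal :=
            ENNReal.toReal_mono
              (ENNReal.add_ne_top.2 ⟨measure_ne_top _ _, measure_ne_top _ _⟩)
              (measure_union_le _ _)
        _ = _ := ENNReal.toReal_add (measure_ne_top _ _) (measure_ne_top _ _)
    have h3 : ∑ i : Fin k₁, (μ₂ (bad (xs i))).toReal ≤ (k₁ : ℝ) * (cR / (4 * ((k₁ : ℝ) + 1))) := by
      calc ∑ i : Fin k₁, (μ₂ (bad (xs i))).toReal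
          ≤ ∑ _i : Fin k₁, cR / (4 * ((k₁ : ℝ) + 1)) :=
            Finset.sum_le_sum fun i _ => hbad _ (hxs i)
        _ = (k₁ : ℝ) * (cR / (4 * ((k₁ : ℝ) + 1))) := by
            rw [Finset.sum_const, Finset.card_univ, Fintype.card_fin, nsmul_eq_mul]
    have h4 : (k₁ : ℝ) * (cR / (4 * ((k₁ : ℝ) + 1))) ≤ cR / 2 := by
      have hk0 : (0:ℝ) ≤ (k₁ : ℝ) := Nat.cast_nonneg _
      rw [show (k₁ : ℝ) * (cR / (4 * ((k₁ : ℝ) + 1))) = (k₁ : ℝ) * cR / (4 * ((k₁ : ℝ) + 1))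
            by ring,
          div_le_div_iff₀ (by positivity) (by norm_num : (0:ℝ) < 2)]
      nlinarith
    linarith
  -- pointwise lower bound on the integrand
  have hpt : ∀ xs : Fin k₁ → J₁, (∀ i, xs i ∈ Metric.ball x₀ r) →
      ∀ ys : Fin k₂ → J₂, (∀ j, ys j ∈ V xs) →
      ((ε / 2) ^ k₂) ^ k₁ ≤
        ∏ i, ∏ j, if (i, j) ∈ E then W (xs i) (ys j) else 1 - W (xs i) (ys j) := by
    intro xs hxs ys hys
    have key : ∀ (i : Fin k₁) (j : Fin k₂),
        ε / 2 ≤ W (xs i) (ys j) ∧ W (xs i) (ys j) ≤ 1 - ε / 2 := by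
      intro i j
      obtain ⟨hyS, hyb⟩ := hys j
      obtain ⟨hl, hu⟩ := hS _ hyS
      have hnb : ¬ (ε / 2 ≤ |W (xs i) (ys j) - W x₀ (ys j)|) := by
        intro h
        exact hyb (Set.mem_iUnion.2 ⟨i, h⟩)
      rw [not_le] at hnb
      obtain ⟨ha, hb⟩ := abs_lt.1 hnb
      constructor <;> linarith
    calc ((ε / 2) ^ k₂) ^ k₁
        = ∏ _i : Fin k₁, ∏ _j : Fin k₂, (ε / 2) := by
          simp [Finset.prod_const, Finset.card_univ, div_pow]
      _ ≤ ∏ i, ∏ j, if (i, j) ∈ E then W (xs i) (ys j) else 1 - W (xs i) (ys j) := by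
          refine Finset.prod_le_prod
            (fun i _ => Finset.prod_nonneg fun j _ => by positivity) (fun i _ => ?_)
          refine Finset.prod_le_prod (fun j _ => by positivity) (fun j _ => ?_)
          obtain ⟨h1, h2⟩ := key i j
          split <;> linarith
  -- measurability / integrability of the integrand
  have hPmeas : Measurable (fun p : (Fin k₁ → J₁) × (Fin k₂ → J₂) =>
      ∏ i, ∏ j, if (i, j) ∈ E then W (p.1 i) (p.2 j) else 1 - W (p.1 i) (p.2 j)) := by
    refine Finset.measurable_prod _ fun i _ => Finset.measurable_prod _ fun j _ => ?_
    have hg1 : Measurable fun p : (Fin k₁ → J₁) × (Fin k₂ → J₂) => p.1 i :=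
      (measurable_pi_apply i).comp measurable_fst
    have hg2 : Measurable fun p : (Fin k₁ → J₁) × (Fin k₂ → J₂) => p.2 j :=
      (measurable_pi_apply j).comp measurable_snd
    have hg : Measurable fun p : (Fin k₁ → J₁) × (Fin k₂ → J₂) =>
        ((p.1 i, p.2 j) : J₁ × J₂) := hg1.prodMk hg2
    have hij : Measurable fun p : (Fin k₁ → J₁) × (Fin k₂ → J₂) => W (p.1 i) (p.2 j) :=
      hWmeas.comp hg
    by_cases h : (i, j) ∈ E <;> simp only [h, if_true, if_false]
    · exact hij
    · exact measurable_const.sub hij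
  have hP01 : ∀ (xs : Fin k₁ → J₁) (ys : Fin k₂ → J₂),
      0 ≤ (∏ i, ∏ j, if (i, j) ∈ E then W (xs i) (ys j) else 1 - W (xs i) (ys j)) ∧
      (∏ i, ∏ j, if (i, j) ∈ E then W (xs i) (ys j) else 1 - W (xs i) (ys j)) ≤ 1 := by
    intro xs ys
    constructor
    · refine Finset.prod_nonneg fun i _ => Finset.prod_nonneg fun j _ => ?_
      split
      · exact hW0 _ _
      · linarith [hW1 (xs i) (ys j)]
    · refine Finset.prod_le_one
        (fun i _ => Finset.prod_nonneg fun j _ => ?_) (fun i _ => Finset.prod_le_one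
          (fun j _ => ?_) (fun j _ => ?_)) <;>
      · split
        · first | exact hW0 _ _ | exact hW1 _ _
        · first
            | linarith [hW1 (xs i) (ys j)]
            | linarith [hW0 (xs i) (ys j)]
  have hPint : ∀ xs : Fin k₁ → J₁,
      Integrable (fun ys : Fin k₂ → J₂ =>
        ∏ i, ∏ j, if (i, j) ∈ E then W (xs i) (ys j) else 1 - W (xs i) (ys j))
        (Measure.pi fun _ => μ₂) := by
    intro xs
    have hm : Measurable (fun ys : Fin k₂ → J₂ =>
        ∏ i, ∏ j, if (i, j) ∈ E then W (xs i) (ys j) else 1 - W (xs i) (ys j)) := by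
      refine Finset.measurable_prod _ fun i _ => Finset.measurable_prod _ fun j _ => ?_
      have hij : Measurable fun ys : Fin k₂ → J₂ => W (xs i) (ys j) :=
        (hsec (xs i)).comp (measurable_pi_apply j)
      by_cases h : (i, j) ∈ E <;> simp only [h, if_true, if_false]
      · exact hij
      · exact measurable_const.sub hij
    refine (integrable_const (1:ℝ)).mono' hm.aestronglyMeasurable ?_
    filter_upwards with ys
    rw [Real.norm_eq_abs, abs_of_nonneg (hP01 xs ys).1]
    exact (hP01 xs ys).2
  -- lower bound for the inner integral
  have hI : ∀ xs : Fin k₁ → J₁, (∀ i, xs i ∈ Metric.ball x₀ r) →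
      ((ε / 2) ^ k₂) ^ k₁ * (cR / 2) ^ k₂ ≤
        ∫ ys : Fin k₂ → J₂,
          (∏ i, ∏ j, if (i, j) ∈ E then W (xs i) (ys j) else 1 - W (xs i) (ys j))
          ∂(Measure.pi fun _ => μ₂) := by
    intro xs hxs
    set s : Set (Fin k₂ → J₂) := Set.pi Set.univ (fun _ => V xs) with hsdef
    have hsm : MeasurableSet s := MeasurableSet.univ_pi fun _ => hVmeas xs
    have h1 := setIntegral_ge_of_const_le (μ := Measure.pi fun _ => μ₂)
      (c := ((ε / 2) ^ k₂) ^ k₁) hsm (measure_ne_top _ _)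
      (fun ys hy => hpt xs hxs ys (fun j => hy j (Set.mem_univ j)))
      ((hPint xs).integrableOn)
    have h2 : (cR / 2) ^ k₂ ≤ ((Measure.pi fun _ : Fin k₂ => μ₂) s).toReal := by
      rw [hsdef, Measure.pi_pi, Finset.prod_const, Finset.card_univ, Fintype.card_fin,
        ENNReal.toReal_pow]
      exact pow_le_pow_left₀ (by positivity) (hVsize xs hxs) k₂
    have h3 := setIntegral_le_integral (s := s) (hPint xs)
      (ae_of_all _ fun ys => (hP01 xs ys).1)
    calc ((ε / 2) ^ k₂) ^ k₁ * (cR / 2) ^ k₂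
        ≤ ((ε / 2) ^ k₂) ^ k₁ * ((Measure.pi fun _ : Fin k₂ => μ₂) s).toReal :=
          mul_le_mul_of_nonneg_left h2 (by positivity)
      _ ≤ _ := le_trans (by rw [smul_eq_mul, mul_comm, Measure.real_def] at h1; exact h1) h3
  -- integrability of the inner integral as a function of `xs`
  have hImeas : StronglyMeasurable (fun xs : Fin k₁ → J₁ =>
      ∫ ys : Fin k₂ → J₂,
        (∏ i, ∏ j, if (i, j) ∈ E then W (xs i) (ys j) else 1 - W (xs i) (ys j))
        ∂(Measure.pi fun _ => μ₂)) :=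
    hPmeas.stronglyMeasurable.integral_prod_right'
  have hIint : Integrable (fun xs : Fin k₁ → J₁ =>
      ∫ ys : Fin k₂ → J₂,
        (∏ i, ∏ j, if (i, j) ∈ E then W (xs i) (ys j) else 1 - W (xs i) (ys j))
        ∂(Measure.pi fun _ => μ₂)) (Measure.pi fun _ => μ₁) := by
    refine (integrable_const (1:ℝ)).mono' hImeas.aestronglyMeasurable ?_
    filter_upwards with xs
    have := norm_integral_le_of_norm_le_const (μ := Measure.pi fun _ : Fin k₂ => μ₂)
      (f := fun ys : Fin k₂ → J₂ =>
        ∏ i, ∏ j, if (i, j) ∈ E then W (xs i) (ys j) else 1 - W (xs i) (ys j))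
      (C := 1) (ae_of_all _ fun ys => by
        rw [Real.norm_eq_abs, abs_of_nonneg (hP01 xs ys).1]; exact (hP01 xs ys).2)
    simpa using this
  -- conclude
  set ballpi : Set (Fin k₁ → J₁) := Set.pi Set.univ (fun _ => Metric.ball x₀ r)
    with hballdef
  have hballm : MeasurableSet ballpi := MeasurableSet.univ_pi fun _ => measurableSet_ball
  have h5 := setIntegral_ge_of_const_le (μ := Measure.pi fun _ => μ₁)
    (c := ((ε / 2) ^ k₂) ^ k₁ * (cR / 2) ^ k₂) hballm (measure_ne_top _ _)
    (fun xs hxs => hI xs (fun i => hxs i (Set.mem_univ i))) hIint.integrableOn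
  have h6 := setIntegral_le_integral (s := ballpi) hIint
    (ae_of_all _ fun xs => integral_nonneg fun ys => (hP01 xs ys).1)
  have hposμ : 0 < ((Measure.pi fun _ : Fin k₁ => μ₁) ballpi).toReal := by
    rw [hballdef, Measure.pi_pi, Finset.prod_const, Finset.card_univ, Fintype.card_fin,
      ENNReal.toReal_pow]
    exact pow_pos (ENNReal.toReal_pos (Metric.measure_ball_pos μ₁ x₀ hr).ne'
      (measure_ne_top _ _)) k₁
  have hfinal : (0:ℝ) <
      ∫ x : Fin k₁ → J₁, ∫ y : Fin k₂ → J₂,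
        (∏ i, ∏ j, if (i, j) ∈ E then W (x i) (y j) else 1 - W (x i) (y j))
          ∂(Measure.pi fun _ => μ₂) ∂(Measure.pi fun _ => μ₁) := by
    refine lt_of_lt_of_le ?_ (le_trans h5 h6)
    positivity
  rw [hint] at hfinal
  exact lt_irrefl _ hfinal
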